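/- arXiv:2106.00617 — 9 statements merged into one kernel-verified Lean document; each statement's English description precedes it below -/
import Mathlib

section
/- In the all-pay auction with favoritism where Player A wins when her bid x^A satisfies x^A > q·x^B − p (ties broken with parameter α), if p ≥ 0 and q·u^B − p ≤ 0, then the bid profile (x^A, x^B) = (0, 0) is a pure Nash equilibrium, with payoffs Π^A = u^A and Π^B = 0. -/
/-- The Blotto/auction winner function: `beta α x y` is 1 if `x > y`, `α` on a tie, 0 if `x < y`. -/
noncomputable def beta (α x y : ℝ) : ℝ := if y < x then 1 else if x = y then α else 0

/-- Player A's payoff in the all-pay auction with favoritism. -/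
noncomputable def payoffA (uA p q α xA xB : ℝ) : ℝ := uA * beta α xA (q * xB - p) - xA

/-- Player B's payoff in the all-pay auction with favoritism. -/
noncomputable def payoffB (uB p q α xA xB : ℝ) : ℝ := uB * (1 - beta α xA (q * xB - p)) - xB

theorem stmt_0 (uA uB p q α : ℝ) (huA : 0 < uA) (huB : 0 < uB) (hq : 0 < q)
    (hα0 : 0 ≤ α) (hα1 : α ≤ 1) (hp : 0 ≤ p) (hcase : q * uB - p ≤ 0) :
    (∀ xA : ℝ, 0 ≤ xA → payoffA uA p q α xA 0 ≤ payoffA uA p q α 0 0) ∧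
    (∀ xB : ℝ, 0 ≤ xB → payoffB uB p q α 0 xB ≤ payoffB uB p q α 0 0) ∧
    payoffA uA p q α 0 0 = uA ∧ payoffB uB p q α 0 0 = 0 := by
  have hp' : 0 < p := lt_of_lt_of_le (mul_pos hq huB) (by linarith)
  have h00A : payoffA uA p q α 0 0 = uA := by
    simp only [payoffA, beta, mul_zero, zero_sub]
    rw [if_pos (by linarith)]
    ring
  have h00B : payoffB uB p q α 0 0 = 0 := by
    simp only [payoffB, beta, mul_zero, zero_sub]
    rw [if_pos (by linarith)]
    ring
  refine ⟨?_, ?_, h00A, h00B⟩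
  · intro xA hxA
    rw [h00A]
    have hb : beta α xA (q * 0 - p) ≤ 1 := by
      unfold beta; split_ifs <;> linarith
    have := mul_le_mul_of_nonneg_left hb huA.le
    simp only [payoffA]
    nlinarith
  · intro xB hxB
    rw [h00B]
    simp only [payoffB, beta]
    split_ifs with h1 h2
    · linarith
    · -- tie: q * xB - p = 0, so xB = p / q ≥ uB
      have hxb : q * xB = p := by linarith [h2]
      have : q * uB ≤ q * xB := by linarith
      have huBxB : uB ≤ xB := le_of_mul_le_mul_left this hq
      nlinarith
    · -- xB wins region? 0 < q*xB - p, so xB > p/q ≥ uB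
      push_neg at h1
      have : p < q * xB := by
        rcases lt_or_eq_of_le h1 with h | h
        · linarith
        · exact absurd h h2
      have : q * uB < q * xB := by linarith
      have : uB < xB := lt_of_mul_lt_mul_left this hq.le
      nlinarith
end

section
/- In the all-pay auction with favoritism with p ≥ 0, if 0 < q·u^B − p ≤ u^A, then there exists no pure Nash equilibrium: for every pair of bids (x^A, x^B) ∈ ℝ≥0 × ℝ≥0, at least one player has a profitable unilateral deviation. -/
lemma beta_win {α x y : ℝ} (h : y < x) : beta α x y = 1 := by
  simp [beta, h]

lemma beta_tie {α x y : ℝ} (h : x = y) : beta α x y = α := by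
  simp [beta, h]

lemma beta_lose {α x y : ℝ} (h : x < y) : beta α x y = 0 := by
  have h1 : ¬ y < x := not_lt.2 h.le
  have h2 : x ≠ y := ne_of_lt h
  simp [beta, h1, h2]

/-- If `p ≥ 0` and `0 < q·u^B − p ≤ u^A`, there is no pure Nash equilibrium: at every
bid profile, some player has a profitable unilateral deviation. -/
theorem stmt_1 (uA uB p q α : ℝ) (huA : 0 < uA) (huB : 0 < uB) (hq : 0 < q)
    (hα0 : 0 ≤ α) (hα1 : α ≤ 1) (hp : 0 ≤ p)
    (hcase1 : 0 < q * uB - p) (hcase2 : q * uB - p ≤ uA) :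
    ∀ xA xB : ℝ, 0 ≤ xA → 0 ≤ xB →
      (∃ xA' : ℝ, 0 ≤ xA' ∧ payoffA uA p q α xA xB < payoffA uA p q α xA' xB) ∨
      (∃ xB' : ℝ, 0 ≤ xB' ∧ payoffB uB p q α xA xB < payoffB uB p q α xA xB') := by
  intro xA xB hxA hxB
  set y := q * xB - p with hy
  -- B's profitable overbid when xA = 0 and current payoffB ≤ 0
  have overbid : ∀ hxA0 : xA = 0, ∀ cur : ℝ, cur ≤ 0 →
      payoffB uB p q α xA xB = cur →
      ∃ xB' : ℝ, 0 ≤ xB' ∧ payoffB uB p q α xA xB < payoffB uB p q α xA xB' := by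
    intro hxA0 cur hcur hpay
    refine ⟨(p + q * uB) / (2 * q), by positivity, ?_⟩
    have hqx : q * ((p + q * uB) / (2 * q)) = (p + q * uB) / 2 := by
      field_simp
    have hlt : xA < q * ((p + q * uB) / (2 * q)) - p := by
      rw [hqx, hxA0]; linarith
    have hb : beta α xA (q * ((p + q * uB) / (2 * q)) - p) = 0 := beta_lose hlt
    rw [hpay]
    unfold payoffB
    rw [hb]
    have : (p + q * uB) / (2 * q) < uB := by
      rw [div_lt_iff₀ (by linarith)]; nlinarith
    linarith
  rcases lt_trichotomy xA y with h | h | h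
  · -- B wins
    have hb : beta α xA y = 0 := beta_lose h
    rcases eq_or_lt_of_le hxA with hxA0 | hxA0
    · -- xA = 0 : B lowers its bid
      right
      refine ⟨(p + q * xB) / (2 * q), by positivity, ?_⟩
      have hqx : q * ((p + q * xB) / (2 * q)) = (p + q * xB) / 2 := by
        field_simp
      have hpq : p < q * xB := by
        have : 0 < y := lt_of_le_of_lt hxA h
        simp only [hy] at this; linarith
      have hlt : xA < q * ((p + q * xB) / (2 * q)) - p := by
        rw [hqx, ← hxA0]; linarith
      have hb' : beta α xA (q * ((p + q * xB) / (2 * q)) - p) = 0 := beta_lose hlt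
      unfold payoffB
      rw [hb', ← hy, hb]
      have : (p + q * xB) / (2 * q) < xB := by
        rw [div_lt_iff₀ (by linarith)]; nlinarith
      linarith
    · -- xA > 0 : A drops to 0
      left
      refine ⟨0, le_refl 0, ?_⟩
      have h0 : (0:ℝ) < y := lt_of_le_of_lt hxA h
      have hb0 : beta α 0 y = 0 := beta_lose h0
      unfold payoffA
      rw [← hy, hb, hb0]
      linarith
  · -- tie
    have hb : beta α xA y = α := beta_tie h
    by_cases hα : α < 1
    · -- A overbids slightly
      left
      refine ⟨xA + uA * (1 - α) / 2, by nlinarith, ?_⟩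
      have hlt : y < xA + uA * (1 - α) / 2 := by
        rw [← h]; nlinarith
      have hb' : beta α (xA + uA * (1 - α) / 2) y = 1 := beta_win hlt
      unfold payoffA
      rw [← hy, hb, hb']
      nlinarith
    · -- α = 1
      have hα' : α = 1 := le_antisymm hα1 (not_lt.1 hα)
      right
      rcases eq_or_lt_of_le hxB with hxB0 | hxB0
      · -- xB = 0, so xA = -p hence xA = 0, p = 0
        have hxA0 : xA = 0 := by
          have : xA = -p := by rw [h, hy, ← hxB0]; ring
          linarith
        exact overbid hxA0 (uB * (1 - α) - xB) (by nlinarith) (by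
          unfold payoffB; rw [← hy, hb])
      · -- xB > 0 : B drops to 0
        refine ⟨0, le_refl 0, ?_⟩
        have hble : beta α xA (q * 0 - p) = 1 := by
          rcases lt_or_eq_of_le (show q * 0 - p ≤ xA by linarith) with hlt | heq
          · exact beta_win hlt
          · rw [beta_tie heq.symm, hα']
        unfold payoffB
        rw [← hy, hb, hble, hα']
        linarith
  · -- A wins
    have hb : beta α xA y = 1 := beta_win h
    rcases eq_or_lt_of_le hxA with hxA0 | hxA0
    · -- xA = 0 : B overbids
      exact Or.inr (overbid hxA0.symm (-xB) (by linarith) (by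
        unfold payoffB; rw [← hy, hb]; ring))
    · -- xA > 0 : A lowers its bid
      left
      refine ⟨(max y 0 + xA) / 2, by positivity, ?_⟩
      have hmax : max y 0 < xA := max_lt h hxA0
      have hlt : y < (max y 0 + xA) / 2 := by
        have : y ≤ max y 0 := le_max_left y 0
        linarith
      have hb' : beta α ((max y 0 + xA) / 2) y = 1 := beta_win hlt
      unfold payoffA
      rw [← hy, hb, hb']
      linarith
end

section
/- Let p ≥ 0, q > 0, u^A, u^B > 0 with 0 < q·u^B − p ≤ u^A. Let B be a random variable with CDF F_B given by F_B(x) = 1 − q·u^B/u^A + p/u^A for x ∈ [0, p/q), F_B(x) = 1 − q·u^B/u^A + q·x/u^A for x ∈ [p/q, u^B], F_B(x) = 1 for x > u^B. Then for every pure bid x^A ∈ [0, q·u^B − p] of Player A, the expected payoff u^A·P(B < (x^A + p)/q) + α·u^A·P(B = (x^A + p)/q) − x^A is at most u^A − q·u^B + p, and for every x^A > q·u^B − p it is strictly less than u^A − q·u^B + p. -/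
open MeasureTheory ProbabilityTheory
open scoped ProbabilityTheory

/-- Against Player B's equilibrium distribution `F_B` (case `p ≥ 0`, `0 < q·u^B − p ≤ u^A`),
Player A's expected payoff from any pure bid in `[0, q·u^B − p]` is at most
`u^A − q·u^B + p`, and any bid above `q·u^B − p` yields strictly less. -/
theorem stmt_3 {Ω : Type*} [MeasureSpace Ω] [IsProbabilityMeasure (ℙ : Measure Ω)]
    (uA uB p q α : ℝ) (huA : 0 < uA) (huB : 0 < uB) (hq : 0 < q)
    (hα0 : 0 ≤ α) (hα1 : α ≤ 1) (hp : 0 ≤ p)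
    (hcase1 : 0 < q * uB - p) (hcase2 : q * uB - p ≤ uA)
    (B : Ω → ℝ) (hBmeas : Measurable B)
    (hBcdf : ∀ x : ℝ, ℙ {ω | B ω ≤ x} = ENNReal.ofReal
      (if x < 0 then 0
       else if x < p / q then 1 - q * uB / uA + p / uA
       else if x ≤ uB then 1 - q * uB / uA + q * x / uA
       else 1)) :
    (∀ xA : ℝ, 0 ≤ xA → xA ≤ q * uB - p →
      uA * (ℙ {ω | B ω < (xA + p) / q}).toReal
        + α * uA * (ℙ {ω | B ω = (xA + p) / q}).toReal - xA
      ≤ uA - q * uB + p) ∧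
    (∀ xA : ℝ, q * uB - p < xA →
      uA * (ℙ {ω | B ω < (xA + p) / q}).toReal
        + α * uA * (ℙ {ω | B ω = (xA + p) / q}).toReal - xA
      < uA - q * uB + p) := by
  have key : ∀ y : ℝ, (ℙ {ω | B ω < y}).toReal + (ℙ {ω | B ω = y}).toReal
      = (ℙ {ω | B ω ≤ y}).toReal := by
    intro y
    have hd : Disjoint {ω | B ω < y} {ω | B ω = y} := by
      rw [Set.disjoint_left]
      intro ω h1 h2
      exact absurd h2 (ne_of_lt h1)
    have hm : MeasurableSet {ω | B ω = y} := hBmeas (measurableSet_singleton y)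
    have hu : {ω | B ω ≤ y} = {ω | B ω < y} ∪ {ω | B ω = y} := by
      ext ω; simp [le_iff_lt_or_eq]
    rw [hu, measure_union hd hm,
      ENNReal.toReal_add (measure_ne_top _ _) (measure_ne_top _ _)]
  have bound : ∀ y : ℝ, uA * (ℙ {ω | B ω < y}).toReal
      + α * uA * (ℙ {ω | B ω = y}).toReal ≤ uA * (ℙ {ω | B ω ≤ y}).toReal := by
    intro y
    have h1 : (0:ℝ) ≤ (ℙ {ω | B ω = y}).toReal := ENNReal.toReal_nonneg
    rw [← key y]
    nlinarith [mul_nonneg (mul_nonneg (show (0:ℝ) ≤ 1 - α by linarith) huA.le) h1]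
  constructor
  · intro xA hx0 hx1
    set y := (xA + p) / q with hy
    have hy0 : ¬ y < 0 := not_lt.mpr (div_nonneg (by linarith) hq.le)
    have hy1 : ¬ y < p / q := not_lt.mpr ((div_le_div_iff_of_pos_right hq).mpr (by linarith))
    have hy2 : y ≤ uB := (div_le_iff₀ hq).mpr (by nlinarith)
    have hqy : q * y = xA + p := by
      rw [hy, mul_div_cancel₀ _ hq.ne']
    have hnn : 0 ≤ 1 - q * uB / uA + q * y / uA := by
      have heq : 1 - q * uB / uA + q * y / uA = (uA - q * uB + q * y) / uA := by
        field_simp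
      rw [heq]
      apply div_nonneg _ huA.le
      rw [hqy]; linarith
    have hval : (ℙ {ω | B ω ≤ y}).toReal = 1 - q * uB / uA + q * y / uA := by
      rw [hBcdf y, if_neg hy0, if_neg hy1, if_pos hy2, ENNReal.toReal_ofReal hnn]
    have hb := bound y
    rw [hval] at hb
    have heq2 : uA * (1 - q * uB / uA + q * y / uA) = uA - q * uB + q * y := by
      field_simp
    linarith [hb, heq2, hqy]
  · intro xA hx1
    set y := (xA + p) / q with hy
    have hyuB : uB < y := (lt_div_iff₀ hq).mpr (by nlinarith)
    have hpq : p / q ≤ uB := (div_le_iff₀ hq).mpr (by nlinarith)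
    have hy0 : ¬ y < 0 := not_lt.mpr (by linarith)
    have hy1 : ¬ y < p / q := not_lt.mpr (by linarith)
    have hy2 : ¬ y ≤ uB := not_le.mpr hyuB
    have hval : (ℙ {ω | B ω ≤ y}).toReal = 1 := by
      rw [hBcdf y, if_neg hy0, if_neg hy1, if_neg hy2, ENNReal.toReal_ofReal zero_le_one]
    have hb := bound y
    rw [hval] at hb
    nlinarith [hb]
end

section
/- Let p ≥ 0, q > 0, u^A, u^B > 0 with 0 < q·u^B − p ≤ u^A. Let A be a random variable with CDF F_A given by F_A(x) = p/(q·u^B) + x/(q·u^B) for x ∈ [0, q·u^B − p] and F_A(x) = 1 for x > q·u^B − p. Then for every pure bid x^B ∈ [0, u^B] of Player B, the expected payoff u^B·P(A < q·x^B − p) + (1−α)·u^B·P(A = q·x^B − p) − x^B is at most 0, and for every x^B > u^B it is strictly negative. -/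
open MeasureTheory ProbabilityTheory
open scoped ProbabilityTheory

/-- Against Player A's equilibrium distribution `F_A` (case `p ≥ 0`, `0 < q·u^B − p ≤ u^A`),
Player B's expected payoff from any pure bid in `[0, u^B]` is at most `0`, and any bid
above `u^B` yields a strictly negative payoff. -/
theorem stmt_4 {Ω : Type*} [MeasureSpace Ω] [IsProbabilityMeasure (ℙ : Measure Ω)]
    (uA uB p q α : ℝ) (huA : 0 < uA) (huB : 0 < uB) (hq : 0 < q)
    (hα0 : 0 ≤ α) (hα1 : α ≤ 1) (hp : 0 ≤ p)
    (hcase1 : 0 < q * uB - p) (hcase2 : q * uB - p ≤ uA)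
    (A : Ω → ℝ) (hAmeas : Measurable A)
    (hAcdf : ∀ x : ℝ, ℙ {ω | A ω ≤ x} = ENNReal.ofReal
      (if x < 0 then 0
       else if x ≤ q * uB - p then p / (q * uB) + x / (q * uB)
       else 1)) :
    (∀ xB : ℝ, 0 ≤ xB → xB ≤ uB →
      uB * (ℙ {ω | A ω < q * xB - p}).toReal
        + (1 - α) * uB * (ℙ {ω | A ω = q * xB - p}).toReal - xB ≤ 0) ∧
    (∀ xB : ℝ, uB < xB →
      uB * (ℙ {ω | A ω < q * xB - p}).toReal
        + (1 - α) * uB * (ℙ {ω | A ω = q * xB - p}).toReal - xB < 0) := by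
  have key : ∀ t : ℝ, (ℙ {ω | A ω < t}).toReal + (ℙ {ω | A ω = t}).toReal
      = (ℙ {ω | A ω ≤ t}).toReal := by
    intro t
    have hu : {ω | A ω < t} ∪ {ω | A ω = t} = {ω | A ω ≤ t} := by
      ext ω; simp [le_iff_lt_or_eq]
    have hd : Disjoint {ω | A ω < t} {ω | A ω = t} := by
      rw [Set.disjoint_left]
      intro ω h1 h2
      simp only [Set.mem_setOf_eq] at h1 h2
      exact absurd h2 (ne_of_lt h1)
    rw [← hu, measure_union hd (hAmeas (measurableSet_singleton t)),
      ENNReal.toReal_add (measure_ne_top _ _) (measure_ne_top _ _)]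
  constructor
  · intro xB hx0 hxu
    have hsum := key (q * xB - p)
    have hx := ENNReal.toReal_nonneg (a := ℙ {ω | A ω < q * xB - p})
    have hy := ENNReal.toReal_nonneg (a := ℙ {ω | A ω = q * xB - p})
    rcases lt_or_ge (q * xB - p) 0 with h | h
    · have hF : (ℙ {ω | A ω ≤ q * xB - p}).toReal = 0 := by
        rw [hAcdf _, if_pos h, ENNReal.ofReal_zero, ENNReal.toReal_zero]
      have hx0' : (ℙ {ω | A ω < q * xB - p}).toReal = 0 := by linarith
      have hy0' : (ℙ {ω | A ω = q * xB - p}).toReal = 0 := by linarith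
      rw [hx0', hy0']
      simp
      linarith
    · have ht2 : q * xB - p ≤ q * uB - p := by nlinarith
      have hF : (ℙ {ω | A ω ≤ q * xB - p}).toReal
          = p / (q * uB) + (q * xB - p) / (q * uB) := by
        rw [hAcdf _, if_neg (not_lt.mpr h), if_pos ht2, ENNReal.toReal_ofReal]
        have : 0 < q * uB := by positivity
        have h1 : 0 ≤ p / (q * uB) := by positivity
        have h2 : 0 ≤ (q * xB - p) / (q * uB) := div_nonneg h this.le
        linarith
      have hquB : 0 < q * uB := by positivity
      have hval : p / (q * uB) + (q * xB - p) / (q * uB) = xB / uB := by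
        field_simp; ring
      rw [hF, hval] at hsum
      have h1 : uB * (ℙ {ω | A ω < q * xB - p}).toReal
          + uB * (ℙ {ω | A ω = q * xB - p}).toReal = xB := by
        calc uB * (ℙ {ω | A ω < q * xB - p}).toReal
            + uB * (ℙ {ω | A ω = q * xB - p}).toReal
            = uB * ((ℙ {ω | A ω < q * xB - p}).toReal
              + (ℙ {ω | A ω = q * xB - p}).toReal) := by ring
          _ = uB * (xB / uB) := by rw [hsum]
          _ = xB := by field_simp
      nlinarith [mul_nonneg (mul_nonneg hα0 huB.le) hy]
  · intro xB hxu
    have hsum := key (q * xB - p)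
    have hx := ENNReal.toReal_nonneg (a := ℙ {ω | A ω < q * xB - p})
    have hy := ENNReal.toReal_nonneg (a := ℙ {ω | A ω = q * xB - p})
    have ht2 : q * uB - p < q * xB - p := by nlinarith
    have hF : (ℙ {ω | A ω ≤ q * xB - p}).toReal = 1 := by
      rw [hAcdf _, if_neg (by linarith), if_neg (not_le.mpr ht2),
        ENNReal.toReal_ofReal zero_le_one]
    rw [hF] at hsum
    have h1 : uB * (ℙ {ω | A ω < q * xB - p}).toReal
        + uB * (ℙ {ω | A ω = q * xB - p}).toReal = uB := by
      nlinarith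
    nlinarith [mul_nonneg (mul_nonneg hα0 huB.le) hy]
end

section
/- Let p ≥ 0, q > 0, u^A, u^B > 0 with q·u^B − p > u^A. Let B be uniformly distributed on [p/q, (u^A + p)/q]. Then for every pure bid x^A ≥ 0 of Player A, the expected payoff u^A·P(B < (x^A + p)/q) + α·u^A·P(B = (x^A + p)/q) − x^A is at most 0; in particular Player A's best achievable payoff against this distribution is 0. -/
open MeasureTheory ProbabilityTheory Filter Topology Set
open scoped ProbabilityTheory

/-!
The CDF of `B` is continuous, so `B` has no atoms (ties have probability `0`, whatever `α`) and
`P(B < (x + p)/q) = min (x/u^A) 1`; A's payoff is then `u^A · min (x/u^A) 1 - x ≤ 0`.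
-/

section LeftContinuousCDF

variable {Ω : Type*} [MeasurableSpace Ω] {μ : Measure Ω} {X : Ω → ℝ} {F : ℝ → ℝ} {y : ℝ}

/-- Continuity of measure from below along `{X ≤ y - 1/(n+1)} ↑ {X < y}`. -/
theorem measure_lt_eq_of_measure_le_eq (hF : ∀ x, μ {ω | X ω ≤ x} = ENNReal.ofReal (F x))
    (hFy : ContinuousWithinAt F (Iio y) y) :
    μ {ω | X ω < y} = ENNReal.ofReal (F y) := by
  set u : ℕ → ℝ := fun n => y - 1 / (n + 1)
  have hu_lt : ∀ n, u n < y := fun n => sub_lt_self y Nat.one_div_pos_of_nat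
  have hu_mono : Monotone u := fun m n hmn => by
    simp only [u]
    gcongr
  have hu_tendsto : Tendsto u atTop (𝓝[<] y) := by
    refine tendsto_nhdsWithin_of_tendsto_nhds_of_eventually_within u ?_
      (Eventually.of_forall hu_lt)
    simpa [u] using tendsto_one_div_add_atTop_nhds_zero_nat.const_sub y
  have hunion : ⋃ n, {ω | X ω ≤ u n} = {ω | X ω < y} := by
    ext ω
    simp only [mem_iUnion, mem_ofPred_eq]
    refine ⟨fun ⟨n, hn⟩ => hn.trans_lt (hu_lt n), fun h => ?_⟩
    obtain ⟨n, hn⟩ := (hu_tendsto.eventually (Ioo_mem_nhdsLT h)).exists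
    exact ⟨n, hn.1.le⟩
  have hmono : Monotone fun n => {ω | X ω ≤ u n} := fun m n hmn ω hω =>
    (mem_ofPred_eq ▸ hω).trans (hu_mono hmn)
  have hlim := tendsto_measure_iUnion_atTop (μ := μ) hmono
  rw [hunion] at hlim
  refine tendsto_nhds_unique hlim ?_
  simpa only [Function.comp_def, hF] using
    (ENNReal.continuous_ofReal.tendsto _).comp (hFy.tendsto.comp hu_tendsto)

theorem measure_eq_eq_zero_of_measure_le_eq (hX : Measurable X)
    (hF : ∀ x, μ {ω | X ω ≤ x} = ENNReal.ofReal (F x))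
    (hFy : ContinuousWithinAt F (Iio y) y) :
    μ {ω | X ω = y} = 0 := by
  have hlt := measure_lt_eq_of_measure_le_eq hF hFy
  have hdiff : {ω | X ω = y} = {ω | X ω ≤ y} \ {ω | X ω < y} := by
    ext ω
    simp only [mem_ofPred_eq, Set.mem_sdiff, not_lt]
    exact ⟨fun h => ⟨h.le, h.ge⟩, fun h => le_antisymm h.1 h.2⟩
  have hsub : {ω | X ω < y} ⊆ {ω | X ω ≤ y} := ofPred_subset_ofPred.2 fun _ => le_of_lt
  rw [hdiff, measure_sdiff hsub (hX measurableSet_Iio).nullMeasurableSet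
    (hlt ▸ ENNReal.ofReal_ne_top), hlt, hF, tsub_self]

end LeftContinuousCDF

theorem stmt_5_general {Ω : Type*} [MeasureSpace Ω]
    (uA p q α : ℝ) (huA : 0 < uA) (hq : 0 < q)
    (B : Ω → ℝ) (hBmeas : Measurable B)
    (hBcdf : ∀ x : ℝ, ℙ {ω | B ω ≤ x} = ENNReal.ofReal
      (min (max ((q * x - p) / uA) 0) 1)) :
    (∀ xA : ℝ, 0 ≤ xA →
      uA * (ℙ {ω | B ω < (xA + p) / q}).toReal
        + α * uA * (ℙ {ω | B ω = (xA + p) / q}).toReal - xA ≤ 0) ∧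
    uA * (ℙ {ω | B ω < (0 + p) / q}).toReal
      + α * uA * (ℙ {ω | B ω = (0 + p) / q}).toReal - 0 = 0 := by
  have hcont : Continuous fun x : ℝ => min (max ((q * x - p) / uA) 0) 1 := by fun_prop
  have hwin : ∀ xA : ℝ, 0 ≤ xA → (ℙ {ω | B ω < (xA + p) / q}).toReal = min (xA / uA) 1 := by
    intro xA hxA
    rw [measure_lt_eq_of_measure_le_eq hBcdf hcont.continuousWithinAt,
      ENNReal.toReal_ofReal (by positivity), mul_div_cancel₀ _ hq.ne', add_sub_cancel_right,
      max_eq_left (by positivity)]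
  have htie : ∀ y, ℙ {ω | B ω = y} = 0 := fun y =>
    measure_eq_eq_zero_of_measure_le_eq hBmeas hBcdf hcont.continuousWithinAt
  refine ⟨fun xA hxA => ?_, ?_⟩
  · rw [hwin xA hxA, htie]
    have hpay : uA * min (xA / uA) 1 ≤ xA :=
      (mul_le_mul_of_nonneg_left (min_le_left _ _) huA.le).trans_eq (mul_div_cancel₀ _ huA.ne')
    simpa using hpay
  · rw [hwin 0 le_rfl, htie]
    simp

/-- Case `q·u^B − p > u^A`: if Player B bids uniformly on `[p/q, (u^A+p)/q]`, every pure
bid of Player A yields expected payoff at most `0`, and the payoff `0` is achieved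
(at the bid `0`), so A's best achievable payoff is `0`. -/
theorem stmt_5 {Ω : Type*} [MeasureSpace Ω] [IsProbabilityMeasure (ℙ : Measure Ω)]
    (uA uB p q α : ℝ) (huA : 0 < uA) (huB : 0 < uB) (hq : 0 < q)
    (hα0 : 0 ≤ α) (hα1 : α ≤ 1) (hp : 0 ≤ p)
    (hcase : uA < q * uB - p)
    (B : Ω → ℝ) (hBmeas : Measurable B)
    (hBcdf : ∀ x : ℝ, ℙ {ω | B ω ≤ x} = ENNReal.ofReal
      (min (max ((q * x - p) / uA) 0) 1)) :
    (∀ xA : ℝ, 0 ≤ xA →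
      uA * (ℙ {ω | B ω < (xA + p) / q}).toReal
        + α * uA * (ℙ {ω | B ω = (xA + p) / q}).toReal - xA ≤ 0) ∧
    uA * (ℙ {ω | B ω < (0 + p) / q}).toReal
      + α * uA * (ℙ {ω | B ω = (0 + p) / q}).toReal - 0 = 0 :=
  stmt_5_general uA p q α huA hq B hBmeas hBcdf
end

section
/- Let p ≥ 0, q > 0, u^A, u^B > 0 with q·u^B − p > u^A. Let A have CDF F_A(x) = 1 − u^A/(q·u^B) + x/(q·u^B) for x ∈ [0, u^A], F_A(x) = 1 for x > u^A, and let B be uniform on [p/q, (u^A+p)/q]. Then the expected payoff of Player B, E[u^B·F_A(q·B − p) − B], equals u^B − (u^A + p)/q, and for every pure bid x^B ∈ [0, u^B], u^B·F_A(q·x^B − p) − x^B ≤ u^B − (u^A + p)/q. -/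
/-!
On the support `[p/q, (u^A+p)/q]` of `B`, the bid `x` lands at `q x - p ∈ [0, u^A]`, where `F_A`
is affine with slope `1/(q u^B)`; hence `u^B F_A(q x - p) - x` is constant there, equal to
`u^B - (u^A + p)/q`, and the expected payoff is that constant. Below the support `B` never wins
and pays `x ≥ 0`; above it `B` always wins but pays more than `(u^A + p)/q`.
-/

open MeasureTheory ProbabilityTheory Set

noncomputable def favoritismCDF (uA uB q x : ℝ) : ℝ :=
  if x < 0 then 0 else if x ≤ uA then 1 - uA / (q * uB) + x / (q * uB) else 1

section Payoff

variable {uA uB p q : ℝ}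

lemma payoff_eq_of_mem_Icc (hq : q ≠ 0) (huB : uB ≠ 0) {x : ℝ} (hx : q * x - p ∈ Icc 0 uA) :
    uB * favoritismCDF uA uB q (q * x - p) - x = uB - (uA + p) / q := by
  rw [favoritismCDF, if_neg hx.1.not_gt, if_pos hx.2]
  field_simp
  ring

lemma payoff_eq_of_mem_Ioc (hq : 0 < q) (huB : uB ≠ 0) {x : ℝ}
    (hx : x ∈ Ioc (p / q) ((uA + p) / q)) :
    uB * favoritismCDF uA uB q (q * x - p) - x = uB - (uA + p) / q := by
  rw [mem_Ioc, div_lt_iff₀' hq, le_div_iff₀' hq] at hx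
  exact payoff_eq_of_mem_Icc hq.ne' huB ⟨by linarith, by linarith⟩

lemma payoff_le (hq : 0 < q) (huB : uB ≠ 0) (hcase : uA < q * uB - p) {x : ℝ} (hx : 0 ≤ x) :
    uB * favoritismCDF uA uB q (q * x - p) - x ≤ uB - (uA + p) / q := by
  have hvalue : 0 < uB - (uA + p) / q := by
    rw [sub_pos, div_lt_iff₀ hq]
    linarith
  by_cases hlow : q * x - p < 0
  · rw [favoritismCDF, if_pos hlow]
    linarith
  by_cases hmid : q * x - p ≤ uA
  · exact (payoff_eq_of_mem_Icc hq.ne' huB ⟨not_lt.1 hlow, hmid⟩).le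
  · have hx' : (uA + p) / q < x := by
      rw [div_lt_iff₀' hq]
      linarith
    rw [favoritismCDF, if_neg hlow, if_neg hmid]
    linarith

end Payoff

lemma ae_mem_Ioc_of_measure_le {Ω : Type*} [MeasurableSpace Ω] {μ : Measure Ω}
    [IsProbabilityMeasure μ] {B : Ω → ℝ} (hB : Measurable B) {a b : ℝ}
    (ha : μ {ω | B ω ≤ a} = 0) (hb : μ {ω | B ω ≤ b} = 1) : ∀ᵐ ω ∂μ, B ω ∈ Ioc a b := by
  have hgt : ∀ᵐ ω ∂μ, ¬ B ω ≤ a := measure_eq_zero_iff_ae_notMem.1 ha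
  have hle : ∀ᵐ ω ∂μ, B ω ≤ b := (mem_ae_iff_prob_eq_one (hB measurableSet_Iic)).2 hb
  filter_upwards [hgt, hle] with ω h₁ h₂ using ⟨not_le.1 h₁, h₂⟩

theorem stmt_6_general {Ω : Type*} [MeasureSpace Ω] [IsProbabilityMeasure (ℙ : Measure Ω)]
    (uA uB p q : ℝ) (huA : 0 < uA) (huB : 0 < uB) (hq : 0 < q)
    (hcase : uA < q * uB - p)
    (FA : ℝ → ℝ)
    (hFA : FA = fun x =>
      if x < 0 then 0
      else if x ≤ uA then 1 - uA / (q * uB) + x / (q * uB)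
      else 1)
    (B : Ω → ℝ) (hBmeas : Measurable B)
    (hBcdf : ∀ x : ℝ, ℙ {ω | B ω ≤ x} = ENNReal.ofReal
      (min (max ((q * x - p) / uA) 0) 1)) :
    (∫ ω, (uB * FA (q * B ω - p) - B ω) ∂ℙ) = uB - (uA + p) / q ∧
    ∀ xB : ℝ, 0 ≤ xB → xB ≤ uB →
      uB * FA (q * xB - p) - xB ≤ uB - (uA + p) / q := by
  obtain rfl : FA = favoritismCDF uA uB q := hFA
  have hlow : ℙ {ω | B ω ≤ p / q} = 0 := by
    rw [hBcdf, mul_div_cancel₀ p hq.ne', sub_self]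
    simp
  have hhigh : ℙ {ω | B ω ≤ (uA + p) / q} = 1 := by
    rw [hBcdf, mul_div_cancel₀ _ hq.ne', add_sub_cancel_right, div_self huA.ne']
    simp
  refine ⟨?_, fun xB hxB _ => payoff_le hq huB.ne' hcase hxB⟩
  have hconst := (ae_mem_Ioc_of_measure_le hBmeas hlow hhigh).mono
    fun ω hω => payoff_eq_of_mem_Ioc hq huB.ne' hω
  rw [integral_congr_ae hconst, integral_const]
  simp

/-- Case `q·u^B − p > u^A`: with `F_A` as Player A's equilibrium distribution and `B`
uniform on `[p/q, (u^A+p)/q]`, Player B's expected payoff `E[u^B·F_A(q·B − p) − B]`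
equals `u^B − (u^A + p)/q`, and every pure bid `x^B ∈ [0, u^B]` yields at most that. -/
theorem stmt_6 {Ω : Type*} [MeasureSpace Ω] [IsProbabilityMeasure (ℙ : Measure Ω)]
    (uA uB p q : ℝ) (huA : 0 < uA) (huB : 0 < uB) (hq : 0 < q) (hp : 0 ≤ p)
    (hcase : uA < q * uB - p)
    (FA : ℝ → ℝ)
    (hFA : FA = fun x =>
      if x < 0 then 0
      else if x ≤ uA then 1 - uA / (q * uB) + x / (q * uB)
      else 1)
    (B : Ω → ℝ) (hBmeas : Measurable B)
    (hBcdf : ∀ x : ℝ, ℙ {ω | B ω ≤ x} = ENNReal.ofReal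
      (min (max ((q * x - p) / uA) 0) 1)) :
    (∫ ω, (uB * FA (q * B ω - p) - B ω) ∂ℙ) = uB - (uA + p) / q ∧
    ∀ xB : ℝ, 0 ≤ xB → xB ≤ uB →
      uB * FA (q * xB - p) - xB ≤ uB - (uA + p) / q :=
  stmt_6_general uA uB p q huA huB hq hcase FA hFA B hBmeas hBcdf
end

section
/- Let G: ℝ² → ℝ² be a continuous map, let D ⊂ ℝ² be a closed rectangle (homeomorphic to a closed disk) with boundary ∂D, and suppose (0,0) ∉ G(∂D). If the winding number of the closed curve G∘γ around (0,0) is nonzero, where γ: [a,b] → ℝ² is a parametrization of ∂D, then there exists x ∈ D with G(x) = (0,0). -/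
/-!
If `G` had no zero on the convex set `D`, then, viewed as a map into `ℂ \ {0}`, it would have a
continuous logarithm on `D`: `exp` is a covering map of `ℂ \ {0}` and `D` is simply connected.
The imaginary part of that logarithm along `γ` is a continuous angle for `G ∘ γ`, so it differs
from `θ` by a constant multiple of `2π`; since `γ a = γ b`, the total angle `θ b - θ a` vanishes.
-/

open Set Complex

theorem Convex.exists_continuousOn_exp_eq {E : Type*} [AddCommGroup E] [Module ℝ E]
    [TopologicalSpace E] [IsTopologicalAddGroup E] [ContinuousSMul ℝ E] [LocallyConvexSpace ℝ E]
    {D : Set E} (hD : Convex ℝ D) {f : E → ℂ} (hf : ContinuousOn f D)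
    (hf0 : ∀ x ∈ D, f x ≠ 0) : ∃ L : E → ℂ, ContinuousOn L D ∧ ∀ x ∈ D, exp (L x) = f x := by
  classical
  rcases D.eq_empty_or_nonempty with rfl | ⟨x₀, hx₀⟩
  · exact ⟨0, continuousOn_empty _, fun _ ↦ False.elim⟩
  have := hD.contractibleSpace ⟨x₀, hx₀⟩
  have := hD.locallyPathConnectedSpace
  obtain ⟨F, ⟨-, hF⟩, -⟩ := isCoveringMapOn_exp.existsUnique_continuousMap_lifts
    ⟨D.domRestrict f, hf.domRestrict⟩ (a₀ := ⟨x₀, hx₀⟩) (exp_log (hf0 x₀ hx₀)) fun x ↦ hf0 x x.2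
  refine ⟨fun x ↦ if h : x ∈ D then F ⟨x, h⟩ else 0, ?_, fun x hx ↦ ?_⟩
  · rw [continuousOn_iff_continuous_domRestrict]
    convert F.continuous with x
    simp
  · simpa [hx] using congrFun hF ⟨x, hx⟩

theorem IsPreconnected.im_sub_eq_of_exp_eq {α : Type*} [TopologicalSpace α] {S : Set α}
    (hS : IsPreconnected S) {L : α → ℂ} {ρ θ : α → ℝ} (hL : ContinuousOn L S)
    (hθ : ContinuousOn θ S) (hρ : ∀ t ∈ S, 0 < ρ t)
    (h : ∀ t ∈ S, exp (L t) = ρ t * exp (θ t * I)) {x y : α} (hx : x ∈ S) (hy : y ∈ S) :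
    (L x).im - θ x = (L y).im - θ y := by
  refine hS.constant_of_mapsTo (T := AddSubgroup.zmultiples (2 * Real.pi))
    (SetLike.isDiscrete_iff_discreteTopology.mpr inferInstance)
    ((continuous_im.comp_continuousOn hL).sub hθ) (fun t ht ↦ ?_) hx hy
  have hexp : exp (L t) = exp (Real.log (ρ t) + θ t * I) := by
    rw [exp_add, ← ofReal_exp, Real.exp_log (hρ t ht), h t ht]
  obtain ⟨n, hn⟩ := exp_eq_exp_iff_exists_int.mp hexp
  exact ⟨n, by simp [hn]⟩

theorem stmt_10_general (G : ℝ × ℝ → ℝ × ℝ) (hG : Continuous G)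
    (a b a₁ a₂ b₁ b₂ : ℝ) (hab : a < b)
    (D : Set (ℝ × ℝ)) (hD : D = Set.Icc (a₁, a₂) (b₁, b₂))
    (γ : ℝ → ℝ × ℝ) (hγcont : ContinuousOn γ (Set.Icc a b))
    (hγim : γ '' Set.Icc a b = frontier D) (hγclosed : γ a = γ b)
    (ρ θ : ℝ → ℝ) (hθ : ContinuousOn θ (Set.Icc a b))
    (hρpos : ∀ t ∈ Set.Icc a b, 0 < ρ t)
    (hlift : ∀ t ∈ Set.Icc a b,
      G (γ t) = (ρ t * Real.cos (θ t), ρ t * Real.sin (θ t)))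
    (hwind : θ b - θ a ≠ 0) :
    ∃ x ∈ D, G x = (0, 0) := by
  by_contra! hG0
  obtain ⟨L, hL, hexpL⟩ := (hD ▸ convex_Icc _ _ : Convex ℝ D).exists_continuousOn_exp_eq
    (equivRealProdCLM.symm.continuous.comp hG).continuousOn
    fun x hx ↦ by simpa [← Prod.mk_zero_zero] using hG0 x hx
  have hγD : MapsTo γ (Icc a b) D := fun t ht ↦
    (hD ▸ isClosed_Icc : IsClosed D).frontier_subset (hγim ▸ mem_image_of_mem γ ht)
  have hpolar : ∀ t ∈ Icc a b, exp (L (γ t)) = ρ t * exp (θ t * I) := fun t ht ↦ by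
    rw [hexpL _ (hγD ht), Function.comp_apply, hlift t ht, exp_mul_I]
    apply Complex.ext <;> simp [← ofReal_cos, ← ofReal_sin]
  have hconst := isPreconnected_Icc.im_sub_eq_of_exp_eq (hL.comp hγcont hγD) hθ hρpos hpolar
    (left_mem_Icc.2 hab.le) (right_mem_Icc.2 hab.le)
  rw [Function.comp_apply, Function.comp_apply, hγclosed] at hconst
  exact hwind (by linarith)

/-- Winding-number fixed-point theorem: if `G` is continuous, `D` is a closed rectangle,
`(0,0)` does not lie on the `G`-image of the boundary of `D`, and the closed curve
`G ∘ γ` (where `γ` parametrizes `∂D`) has nonzero winding number around `(0,0)`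
(witnessed by a continuous polar lift `(ρ, θ)` with `ρ > 0` and total angle
`θ b − θ a ≠ 0`), then `G` has a zero in `D`. -/
theorem stmt_10 (G : ℝ × ℝ → ℝ × ℝ) (hG : Continuous G)
    (a b a₁ a₂ b₁ b₂ : ℝ) (hab : a < b) (h₁ : a₁ < b₁) (h₂ : a₂ < b₂)
    (D : Set (ℝ × ℝ)) (hD : D = Set.Icc (a₁, a₂) (b₁, b₂))
    (γ : ℝ → ℝ × ℝ) (hγcont : ContinuousOn γ (Set.Icc a b))
    (hγim : γ '' Set.Icc a b = frontier D) (hγclosed : γ a = γ b)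
    (hbd : ∀ x ∈ frontier D, G x ≠ (0, 0))
    (ρ θ : ℝ → ℝ) (hρ : ContinuousOn ρ (Set.Icc a b)) (hθ : ContinuousOn θ (Set.Icc a b))
    (hρpos : ∀ t ∈ Set.Icc a b, 0 < ρ t)
    (hlift : ∀ t ∈ Set.Icc a b,
      G (γ t) = (ρ t * Real.cos (θ t), ρ t * Real.sin (θ t)))
    (hwind : θ b - θ a ≠ 0) :
    ∃ x ∈ D, G x = (0, 0) :=
  stmt_10_general G hG a b a₁ a₂ b₁ b₂ hab D hD γ hγcont hγim hγclosed ρ θ hθ hρpos hlift hwind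
end

section
/- In the Colonel Blotto game with favoritism with n battlefields, if battlefield i satisfies p_i ≥ 0 and 0 < q_i·w_i·κ_B − p_i ≤ w_i·κ_A for some κ_A, κ_B > 0, and Player A's allocation A_i has CDF F(x) = p_i/(q_i w_i κ_B) + x/(q_i w_i κ_B) on [0, q_i w_i κ_B − p_i] while Player B's allocation B_i has CDF G(x) = 1 − q_i κ_B/κ_A + p_i/(w_i κ_A) on [0, p_i/q_i), G(x) = 1 − q_i κ_B/κ_A + q_i x/(w_i κ_A) on [p_i/q_i, w_i κ_B], G(x)=1 beyond, with A_i, B_i independent, then Player A's expected gain in battlefield i, w_i·P(A_i > q_i·B_i − p_i) + α·w_i·P(A_i = q_i·B_i − p_i), equals w_i·(1 − q_i κ_B/κ_A + p_i/(w_i κ_A)) + (q_i w_i κ_B − p_i)²/(2 w_i κ_A q_i κ_B). -/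
/-!
The two CDFs say that `A` and `B` are each an atom at `0` plus a uniform part, on
`[0, q w κ_B - p]` and `[p / q, w κ_B]` respectively. By independence,
`P(q B - p < A) = ∫ P(A > q b - p) dP_B(b)`: the atom of `B` contributes its whole mass, and on
`[p / q, w κ_B]` the survival function of `A` at `q b - p` is `1 - b / (w κ_B)`, whose integral is
the quadratic term. Ties have probability zero: `A` has an atom only at `0`, i.e. for `b = p / q`,
which carries no mass under `B` when `p > 0`, while for `p = 0` the atom of `A` has mass zero.
-/

open MeasureTheory ProbabilityTheory Set

noncomputable def atomPlusUniform (x₀ m k l u : ℝ) : Measure ℝ :=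
  ENNReal.ofReal m • Measure.dirac x₀ + ENNReal.ofReal k • volume.restrict (Icc l u)

theorem atomPlusUniform_Iic (x₀ l u : ℝ) {m k : ℝ} (hm : 0 ≤ m) (hk : 0 ≤ k) (x : ℝ) :
    atomPlusUniform x₀ m k l u (Iic x)
      = ENNReal.ofReal ((if x₀ ≤ x then m else 0) + k * max (min x u - l) 0) := by
  have hIcc : Iic x ∩ Icc l u = Icc l (min x u) := by
    ext y; simp only [mem_inter_iff, mem_Iic, mem_Icc, le_min_iff]; tauto
  rw [atomPlusUniform, Measure.add_apply, Measure.smul_apply, Measure.smul_apply,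
    Measure.dirac_apply' _ measurableSet_Iic, Measure.restrict_apply measurableSet_Iic, hIcc,
    Real.volume_Icc, ENNReal.ofReal_add (by positivity) (by positivity),
    ENNReal.ofReal_mul hk, ENNReal.ofReal_max, ENNReal.ofReal_zero, max_eq_left zero_le]
  by_cases h : x₀ ≤ x <;> simp [h]

theorem atomPlusUniform_singleton (x₀ m k l u t : ℝ) :
    atomPlusUniform x₀ m k l u {t} = ({x₀} : Set ℝ).indicator (fun _ => ENNReal.ofReal m) t := by
  rw [atomPlusUniform, Measure.add_apply, Measure.smul_apply, Measure.smul_apply,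
    Measure.dirac_apply' _ (measurableSet_singleton t),
    Measure.restrict_apply (measurableSet_singleton t),
    measure_mono_null inter_subset_left Real.volume_singleton]
  by_cases h : t = x₀ <;> simp [h]

theorem lintegral_atomPlusUniform (x₀ m k l u : ℝ) (f : ℝ → ENNReal) :
    ∫⁻ x, f x ∂atomPlusUniform x₀ m k l u
      = ENNReal.ofReal m * f x₀ + ENNReal.ofReal k * ∫⁻ x in Icc l u, f x := by
  rw [atomPlusUniform, lintegral_add_measure, lintegral_smul_measure, lintegral_smul_measure,
    lintegral_dirac, smul_eq_mul, smul_eq_mul]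

theorem lintegral_atomPlusUniform_singleton_comp (x₀ m k l u : ℝ) (ν : Measure ℝ) {f : ℝ → ℝ}
    (hf : Measurable f) :
    ∫⁻ y, atomPlusUniform x₀ m k l u {f y} ∂ν = ENNReal.ofReal m * ν (f ⁻¹' {x₀}) := by
  simp_rw [atomPlusUniform_singleton]
  exact lintegral_indicator_const_comp hf (measurableSet_singleton x₀) _

theorem integral_Icc_one_sub_div {a s : ℝ} (hs : s ≠ 0) (has : a ≤ s) :
    ∫ x in Icc a s, (1 - x / s) = (s - a) ^ 2 / (2 * s) := by
  rw [integral_Icc_eq_integral_Ioc, ← intervalIntegral.integral_of_le has,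
    intervalIntegral.integral_sub intervalIntegrable_const
      ((continuous_id'.div_const s).intervalIntegrable a s),
    intervalIntegral.integral_const, intervalIntegral.integral_div, integral_id, smul_eq_mul,
    mul_one]
  field_simp
  ring

theorem map_eq_of_forall_measure_le_eq {Ω : Type*} [MeasurableSpace Ω] {P : Measure Ω}
    [IsFiniteMeasure P] {X : Ω → ℝ} (hX : Measurable X) {μ : Measure ℝ}
    (h : ∀ x, P {ω | X ω ≤ x} = μ (Iic x)) : P.map X = μ :=
  Measure.ext_of_Iic _ _ fun x => by rw [Measure.map_apply hX measurableSet_Iic]; exact h x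

theorem ProbabilityTheory.IndepFun.measure_preimage_eq_lintegral {Ω α β : Type*}
    [MeasurableSpace Ω] [MeasurableSpace α] [MeasurableSpace β] {P : Measure Ω}
    [IsFiniteMeasure P] {X : Ω → α} {Y : Ω → β} (hX : Measurable X) (hY : Measurable Y)
    (h : IndepFun X Y P) {S : Set (α × β)} (hS : MeasurableSet S) :
    P ((fun ω => (X ω, Y ω)) ⁻¹' S) = ∫⁻ x, P.map Y (Prod.mk x ⁻¹' S) ∂P.map X := by
  rw [← Measure.map_apply (hX.prodMk hY) hS,
    (indepFun_iff_map_prod_eq_prod_map_map hX.aemeasurable hY.aemeasurable).1 h,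
    Measure.prod_apply hS]

noncomputable def lawA (p c : ℝ) : Measure ℝ := atomPlusUniform 0 (p / c) (1 / c) 0 (c - p)

noncomputable def lawB (w p q κA κB : ℝ) : Measure ℝ :=
  atomPlusUniform 0 (1 - q * κB / κA + p / (w * κA)) (q / (w * κA)) (p / q) (w * κB)

theorem lawA_Iic {p c : ℝ} (hp : 0 ≤ p) (hpc : p < c) (x : ℝ) :
    lawA p c (Iic x) = ENNReal.ofReal
      (if x < 0 then 0 else if x ≤ c - p then p / c + x / c else 1) := by
  have hc : 0 < c := by linarith
  rw [lawA, atomPlusUniform_Iic _ _ _ (by positivity) (by positivity)]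
  congr 1
  rcases lt_or_ge x 0 with hx | hx
  · rw [if_neg (not_le.2 hx), if_pos hx, max_eq_right (by linarith [min_le_left x (c - p)])]
    ring
  rw [if_pos hx, if_neg (not_lt.2 hx)]
  rcases le_or_gt x (c - p) with hxu | hxu
  · rw [if_pos hxu, min_eq_left hxu, max_eq_left (by linarith)]
    ring
  · rw [if_neg (not_le.2 hxu), min_eq_right hxu.le, max_eq_left (by linarith)]
    field_simp
    ring

theorem isProbabilityMeasure_lawA {p c : ℝ} (hp : 0 ≤ p) (hpc : p < c) :
    IsProbabilityMeasure (lawA p c) := by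
  have hc : 0 < c := by linarith
  constructor
  rw [lawA, atomPlusUniform, Measure.add_apply, Measure.smul_apply, Measure.smul_apply,
    measure_univ, Measure.restrict_apply_univ, Real.volume_Icc, smul_eq_mul, smul_eq_mul,
    mul_one, ← ENNReal.ofReal_mul (by positivity),
    ← ENNReal.ofReal_add (by positivity) (mul_nonneg (by positivity) (by linarith)),
    ← ENNReal.ofReal_one]
  congr 1
  field_simp
  ring

theorem lawA_Ioi {p c t : ℝ} (hp : 0 ≤ p) (hpc : p < c) (ht : 0 ≤ t) (htc : t ≤ c - p) :
    lawA p c (Ioi t) = ENNReal.ofReal ((c - p - t) / c) := by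
  have hc : 0 < c := by linarith
  have := isProbabilityMeasure_lawA hp hpc
  rw [← compl_Iic, prob_compl_eq_one_sub measurableSet_Iic, lawA_Iic hp hpc,
    if_neg (not_lt.2 ht), if_pos htc, ← ENNReal.ofReal_one,
    ← ENNReal.ofReal_sub _ (by positivity)]
  congr 1
  field_simp
  ring

theorem lawA_Ioi_neg {p c : ℝ} (hp : 0 ≤ p) (hpc : p < c) : lawA p c (Ioi (-p)) = 1 := by
  have := isProbabilityMeasure_lawA hp hpc
  rw [← compl_Iic, prob_compl_eq_one_sub measurableSet_Iic, lawA_Iic hp hpc]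
  split_ifs with hneg hle
  · simp
  · simp [neg_div]
  · linarith

theorem lawB_atom_nonneg {w p q κA κB : ℝ} (hw : 0 < w) (hκA : 0 < κA)
    (hcase2 : q * w * κB - p ≤ w * κA) : 0 ≤ 1 - q * κB / κA + p / (w * κA) := by
  have hle : (q * w * κB - p) / (w * κA) ≤ 1 := (div_le_one (by positivity)).2 hcase2
  have hrw : 1 - q * κB / κA + p / (w * κA) = 1 - (q * w * κB - p) / (w * κA) := by
    field_simp
    ring
  linarith

theorem lawB_Iic {w p q κA κB : ℝ} (hw : 0 < w) (hq : 0 < q) (hκA : 0 < κA) (hp : 0 ≤ p)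
    (hcase1 : 0 < q * w * κB - p) (hcase2 : q * w * κB - p ≤ w * κA) (x : ℝ) :
    lawB w p q κA κB (Iic x) = ENNReal.ofReal
      (if x < 0 then 0
       else if x < p / q then 1 - q * κB / κA + p / (w * κA)
       else if x ≤ w * κB then 1 - q * κB / κA + q * x / (w * κA)
       else 1) := by
  have hpq : p / q ≤ w * κB := by rw [div_le_iff₀ hq]; linarith
  rw [lawB, atomPlusUniform_Iic _ _ _ (lawB_atom_nonneg hw hκA hcase2) (by positivity)]
  congr 1
  rcases lt_or_ge x 0 with hx | hx
  · rw [if_neg (not_le.2 hx), if_pos hx,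
      max_eq_right (by linarith [min_le_left x (w * κB), div_nonneg hp hq.le])]
    ring
  rw [if_pos hx, if_neg (not_lt.2 hx)]
  rcases lt_or_ge x (p / q) with hxl | hxl
  · rw [if_pos hxl, max_eq_right (by linarith [min_le_left x (w * κB)])]
    ring
  rw [if_neg (not_lt.2 hxl)]
  rcases le_or_gt x (w * κB) with hxu | hxu
  · rw [if_pos hxu, min_eq_left hxu, max_eq_left (by linarith)]
    field_simp
    ring
  · rw [if_neg (not_le.2 hxu), min_eq_right hxu.le, max_eq_left (by linarith)]
    field_simp
    ring

theorem lintegral_lawA_Ioi_lawB {w p q κA κB : ℝ} (hw : 0 < w) (hq : 0 < q) (hκA : 0 < κA)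
    (hκB : 0 < κB) (hp : 0 ≤ p) (hcase1 : 0 < q * w * κB - p)
    (hcase2 : q * w * κB - p ≤ w * κA) :
    ∫⁻ b, lawA p (q * w * κB) (Ioi (q * b - p)) ∂lawB w p q κA κB
      = ENNReal.ofReal (1 - q * κB / κA + p / (w * κA)
          + (q * w * κB - p) ^ 2 / (2 * w ^ 2 * κA * q * κB)) := by
  have hpc : p < q * w * κB := by linarith
  have hpq : p / q ≤ w * κB := by rw [div_le_iff₀ hq]; linarith
  have hsurv : ∀ b ∈ Icc (p / q) (w * κB),
      lawA p (q * w * κB) (Ioi (q * b - p)) = ENNReal.ofReal (1 - b / (w * κB)) := by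
    rintro b ⟨hb₁, hb₂⟩
    rw [div_le_iff₀ hq] at hb₁
    rw [lawA_Ioi hp hpc (by linarith) (by nlinarith)]
    congr 1
    field_simp
    ring
  have hsurv_nonneg : ∀ b ∈ Icc (p / q) (w * κB), 0 ≤ 1 - b / (w * κB) := fun b hb =>
    sub_nonneg.2 ((div_le_one (by positivity)).2 hb.2)
  rw [lawB, lintegral_atomPlusUniform, mul_zero, zero_sub, lawA_Ioi_neg hp hpc, mul_one,
    setLIntegral_congr_fun measurableSet_Icc hsurv,
    ← ofReal_integral_eq_lintegral_ofReal
      (by fun_prop : Continuous fun b : ℝ => 1 - b / (w * κB)).integrableOn_Icc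
      (ae_restrict_of_forall_mem measurableSet_Icc hsurv_nonneg),
    integral_Icc_one_sub_div (by positivity) hpq, ← ENNReal.ofReal_mul (by positivity),
    ← ENNReal.ofReal_add (lawB_atom_nonneg hw hκA hcase2) (by positivity)]
  congr 1
  field_simp

theorem lintegral_lawA_singleton_lawB {w p q κA κB : ℝ} (hq : 0 < q) (hp : 0 ≤ p) :
    ∫⁻ b, lawA p (q * w * κB) {q * b - p} ∂lawB w p q κA κB = 0 := by
  have hpre : (fun b => q * b - p) ⁻¹' {0} = {p / q} := by
    ext b
    simp only [mem_preimage, mem_singleton_iff, sub_eq_zero, eq_div_iff hq.ne', mul_comm]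
  rw [lawA, lintegral_atomPlusUniform_singleton_comp _ _ _ _ _ _ (by fun_prop), hpre, lawB,
    atomPlusUniform_singleton]
  rcases hp.eq_or_lt with rfl | hp
  · simp
  · simp [hp.ne', hq.ne']

theorem stmt_14_general {Ω : Type*} [MeasureSpace Ω] [IsProbabilityMeasure (ℙ : Measure Ω)]
    (w p q κA κB α : ℝ) (hw : 0 < w) (hq : 0 < q) (hκA : 0 < κA) (hκB : 0 < κB)
    (hp : 0 ≤ p)
    (hcase1 : 0 < q * w * κB - p) (hcase2 : q * w * κB - p ≤ w * κA)
    (A B : Ω → ℝ) (hAmeas : Measurable A) (hBmeas : Measurable B)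
    (hindep : IndepFun A B ℙ)
    (hAcdf : ∀ x : ℝ, ℙ {ω | A ω ≤ x} = ENNReal.ofReal
      (if x < 0 then 0
       else if x ≤ q * w * κB - p then p / (q * w * κB) + x / (q * w * κB)
       else 1))
    (hBcdf : ∀ x : ℝ, ℙ {ω | B ω ≤ x} = ENNReal.ofReal
      (if x < 0 then 0
       else if x < p / q then 1 - q * κB / κA + p / (w * κA)
       else if x ≤ w * κB then 1 - q * κB / κA + q * x / (w * κA)
       else 1)) :
    w * (ℙ {ω | q * B ω - p < A ω}).toReal
      + α * w * (ℙ {ω | A ω = q * B ω - p}).toReal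
    = w * (1 - q * κB / κA + p / (w * κA))
      + (q * w * κB - p) ^ 2 / (2 * w * κA * q * κB) := by
  have hA : (ℙ : Measure Ω).map A = lawA p (q * w * κB) :=
    map_eq_of_forall_measure_le_eq hAmeas fun x =>
      (hAcdf x).trans (lawA_Iic hp (by linarith) x).symm
  have hB : (ℙ : Measure Ω).map B = lawB w p q κA κB :=
    map_eq_of_forall_measure_le_eq hBmeas fun x =>
      (hBcdf x).trans (lawB_Iic hw hq hκA hp hcase1 hcase2 x).symm
  have hwin : ℙ {ω | q * B ω - p < A ω} = ENNReal.ofReal (1 - q * κB / κA + p / (w * κA)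
      + (q * w * κB - p) ^ 2 / (2 * w ^ 2 * κA * q * κB)) := by
    rw [← lintegral_lawA_Ioi_lawB hw hq hκA hκB hp hcase1 hcase2, ← hA, ← hB]
    exact hindep.symm.measure_preimage_eq_lintegral hBmeas hAmeas
      (S := {x | q * x.1 - p < x.2}) (measurableSet_lt (by fun_prop) measurable_snd)
  have htie : ℙ {ω | A ω = q * B ω - p} = 0 := by
    rw [← lintegral_lawA_singleton_lawB (w := w) (κA := κA) (κB := κB) hq hp, ← hA, ← hB]
    exact hindep.symm.measure_preimage_eq_lintegral hBmeas hAmeas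
      (S := {x | x.2 = q * x.1 - p}) (measurableSet_eq_fun measurable_snd (by fun_prop))
  rw [hwin, htie, ENNReal.toReal_ofReal
    (add_nonneg (lawB_atom_nonneg hw hκA hcase2) (by positivity)), ENNReal.toReal_zero]
  field_simp
  ring

/-- Battlefield `i` with `p_i ≥ 0` and `0 < q_i·w_i·κ_B − p_i ≤ w_i·κ_A`: if the players'
independent allocations follow the stated optimal univariate distributions, Player A's
expected gain equals `w·(1 − q·κ_B/κ_A + p/(w·κ_A)) + (q·w·κ_B − p)²/(2·w·κ_A·q·κ_B)`. -/
theorem stmt_14 {Ω : Type*} [MeasureSpace Ω] [IsProbabilityMeasure (ℙ : Measure Ω)]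
    (w p q κA κB α : ℝ) (hw : 0 < w) (hq : 0 < q) (hκA : 0 < κA) (hκB : 0 < κB)
    (hα0 : 0 ≤ α) (hα1 : α ≤ 1) (hp : 0 ≤ p)
    (hcase1 : 0 < q * w * κB - p) (hcase2 : q * w * κB - p ≤ w * κA)
    (A B : Ω → ℝ) (hAmeas : Measurable A) (hBmeas : Measurable B)
    (hindep : IndepFun A B ℙ)
    (hAcdf : ∀ x : ℝ, ℙ {ω | A ω ≤ x} = ENNReal.ofReal
      (if x < 0 then 0
       else if x ≤ q * w * κB - p then p / (q * w * κB) + x / (q * w * κB)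
       else 1))
    (hBcdf : ∀ x : ℝ, ℙ {ω | B ω ≤ x} = ENNReal.ofReal
      (if x < 0 then 0
       else if x < p / q then 1 - q * κB / κA + p / (w * κA)
       else if x ≤ w * κB then 1 - q * κB / κA + q * x / (w * κA)
       else 1)) :
    w * (ℙ {ω | q * B ω - p < A ω}).toReal
      + α * w * (ℙ {ω | A ω = q * B ω - p}).toReal
    = w * (1 - q * κB / κA + p / (w * κA))
      + (q * w * κB - p) ^ 2 / (2 * w * κA * q * κB) :=
  stmt_14_general w p q κA κB α hw hq hκA hκB hp hcase1 hcase2 A B hAmeas hBmeas hindep hAcdf hBcdf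
end

section
/- In the Colonel Blotto game with favoritism, if battlefield i satisfies p_i ≥ 0 and q_i·w_i·κ_B − p_i > w_i·κ_A for some κ_A, κ_B > 0, and Player A's allocation A_i has CDF F(x) = 1 − κ_A/(q_i κ_B) + x/(q_i w_i κ_B) on [0, w_i κ_A] (F = 1 beyond), while Player B's allocation B_i is uniform on [p_i/q_i, (w_i κ_A + p_i)/q_i], with A_i, B_i independent, then Player A's expected gain w_i·P(A_i > q_i·B_i − p_i) equals w_i·κ_A/(2·q_i·κ_B). -/
/-!
Put `U = q B - p` and `s = κA / (q κB)`. The hypothesis on `B` says that `U` is uniform on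
`(0, w κA]`, and `U` is independent of `A`. On that interval the CDF of `A` is affine,
`F(u) = 1 - s + s u / (w κA)`, so `P(A ≤ U) = E[F(U)] = 1 - s / 2`. Player A's expected gain is
therefore `w P(U < A) = w s / 2`.
-/

open MeasureTheory ProbabilityTheory Set
open scoped ProbabilityTheory

theorem ProbabilityTheory.IndepFun.measure_le_eq_lintegral {Ω α : Type*} [MeasurableSpace Ω]
    [TopologicalSpace α] [PartialOrder α] [OrderClosedTopology α] [SecondCountableTopology α]
    [MeasurableSpace α] [OpensMeasurableSpace α]
    {μ : Measure Ω} [IsFiniteMeasure μ] {X Y : Ω → α} (hX : Measurable X) (hY : Measurable Y)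
    (h : IndepFun X Y μ) :
    μ {ω | X ω ≤ Y ω} = ∫⁻ y, μ {ω | X ω ≤ y} ∂(μ.map Y) := by
  have hS : MeasurableSet {z : α × α | z.2 ≤ z.1} :=
    measurableSet_le measurable_snd measurable_fst
  calc μ {ω | X ω ≤ Y ω} = μ.map (fun ω => (Y ω, X ω)) {z | z.2 ≤ z.1} := by
        rw [Measure.map_apply (hY.prodMk hX) hS]; rfl
    _ = ((μ.map Y).prod (μ.map X)) {z | z.2 ≤ z.1} := by
        rw [(indepFun_iff_map_prod_eq_prod_map_map hY.aemeasurable hX.aemeasurable).1 h.symm]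
    _ = ∫⁻ y, μ {ω | X ω ≤ y} ∂(μ.map Y) := by
        rw [Measure.prod_apply hS]
        refine lintegral_congr fun y => ?_
        change (μ.map X) (Iic y) = _
        rw [Measure.map_apply hX measurableSet_Iic]; rfl

theorem MeasureTheory.Measure.eq_smul_restrict_Ioc_of_apply_Iic {ν : Measure ℝ}
    [IsFiniteMeasure ν] {a b : ℝ} (hab : a < b)
    (h : ∀ x, ν (Iic x) = ENNReal.ofReal (min (max ((x - a) / (b - a)) 0) 1)) :
    ν = ENNReal.ofReal (b - a)⁻¹ • volume.restrict (Ioc a b) := by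
  refine Measure.ext_of_Iic _ _ fun x => ?_
  have hba : 0 < b - a := sub_pos.2 hab
  rw [h, Measure.smul_apply, Measure.restrict_apply measurableSet_Iic, inter_comm, Ioc_inter_Iic,
    Real.volume_Ioc, smul_eq_mul, ← ENNReal.ofReal_mul (by positivity), inv_mul_eq_div,
    ← min_sub_sub_right, ← min_div_div_right hba.le, div_self hba.ne', min_comm]
  rcases le_total ((x - a) / (b - a)) 0 with ht | ht
  · simp [ht, ENNReal.ofReal_of_nonpos]
  · rw [max_eq_left ht]

theorem setLIntegral_Ioc_zero_ofReal_add_mul {c α β : ℝ} (hc : 0 ≤ c) (hα : 0 ≤ α)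
    (hβ : 0 ≤ β) :
    ∫⁻ u in Ioc 0 c, ENNReal.ofReal (α + β * u) =
      ENNReal.ofReal (α * c + β * c ^ 2 / 2) := by
  rw [← ofReal_integral_eq_lintegral_ofReal, ← intervalIntegral.integral_of_le hc]
  · congr 1
    rw [intervalIntegral.integral_add intervalIntegrable_const
      ((continuous_const_mul β).intervalIntegrable _ _),
      intervalIntegral.integral_const_mul, integral_id, intervalIntegral.integral_const]
    simp only [sub_zero, smul_eq_mul]
    ring
  · exact (continuous_const.add (continuous_const.mul continuous_id)).integrableOn_Ioc
  · filter_upwards [ae_restrict_mem measurableSet_Ioc] with u hu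
    have := hu.1.le
    positivity

theorem ProbabilityTheory.IndepFun.measure_le_eq_of_map_eq_uniformIoc {Ω : Type*}
    [MeasurableSpace Ω] {μ : Measure Ω} [IsFiniteMeasure μ] {X U : Ω → ℝ}
    (hX : Measurable X) (hU : Measurable U) (h : IndepFun X U μ) {c α β : ℝ} (hc : 0 < c)
    (hα : 0 ≤ α) (hβ : 0 ≤ β)
    (hlawU : μ.map U = ENNReal.ofReal c⁻¹ • volume.restrict (Ioc 0 c))
    (hcdfX : ∀ u ∈ Ioc 0 c, μ {ω | X ω ≤ u} = ENNReal.ofReal (α + β * u)) :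
    μ {ω | X ω ≤ U ω} = ENNReal.ofReal (α + β * c / 2) := by
  rw [h.measure_le_eq_lintegral hX hU, hlawU, lintegral_smul_measure,
    setLIntegral_congr_fun measurableSet_Ioc hcdfX,
    setLIntegral_Ioc_zero_ofReal_add_mul hc.le hα hβ, smul_eq_mul,
    ← ENNReal.ofReal_mul (by positivity)]
  congr 1
  field_simp

/-- Battlefield `i` with `p_i ≥ 0` and `q_i·w_i·κ_B − p_i > w_i·κ_A`: if `A_i` follows the
stated distribution and `B_i` is uniform on `[p/q, (w·κ_A + p)/q]`, independently, then
Player A's expected gain is `w·κ_A/(2·q·κ_B)`. -/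
theorem stmt_15 {Ω : Type*} [MeasureSpace Ω] [IsProbabilityMeasure (ℙ : Measure Ω)]
    (w p q κA κB : ℝ) (hw : 0 < w) (hq : 0 < q) (hκA : 0 < κA) (hκB : 0 < κB)
    (hp : 0 ≤ p) (hcase : w * κA < q * w * κB - p)
    (A B : Ω → ℝ) (hAmeas : Measurable A) (hBmeas : Measurable B)
    (hindep : IndepFun A B ℙ)
    (hAcdf : ∀ x : ℝ, ℙ {ω | A ω ≤ x} = ENNReal.ofReal
      (if x < 0 then 0
       else if x ≤ w * κA then 1 - κA / (q * κB) + x / (q * w * κB)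
       else 1))
    (hBcdf : ∀ x : ℝ, ℙ {ω | B ω ≤ x} = ENNReal.ofReal
      (min (max ((q * x - p) / (w * κA)) 0) 1)) :
    w * (ℙ {ω | q * B ω - p < A ω}).toReal = w * κA / (2 * q * κB) := by
  set s := κA / (q * κB) with hs
  have hs_nonneg : 0 ≤ s := by positivity
  have hs_lt_one : s < 1 := by rw [div_lt_one (by positivity)]; nlinarith
  set U : Ω → ℝ := fun ω => q * B ω - p
  have hU : Measurable U := by fun_prop
  have hindepU : IndepFun A U ℙ :=
    hindep.comp measurable_id (by fun_prop : Measurable (q * · - p))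
  have hlawU :
      Measure.map U ℙ = ENNReal.ofReal (w * κA)⁻¹ • volume.restrict (Ioc 0 (w * κA)) := by
    have := Measure.isProbabilityMeasure_map (μ := (ℙ : Measure Ω)) hU.aemeasurable
    refine (Measure.eq_smul_restrict_Ioc_of_apply_Iic (a := 0) (b := w * κA) (by positivity)
      fun x => ?_).trans (by rw [sub_zero])
    have hUx : U ⁻¹' Iic x = {ω | B ω ≤ (x + p) / q} := by
      ext ω; simp only [U, mem_preimage, mem_Iic, mem_ofPred_eq, le_div_iff₀ hq]
      constructor <;> intro <;> linarith
    rw [Measure.map_apply hU measurableSet_Iic, hUx, hBcdf]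
    congr 3; field_simp; ring
  have hAU : ℙ {ω | A ω ≤ U ω} = ENNReal.ofReal (1 - s / 2) := by
    rw [hindepU.measure_le_eq_of_map_eq_uniformIoc hAmeas hU (α := 1 - s)
      (β := (q * w * κB)⁻¹) (by positivity) (by linarith) (by positivity) hlawU fun u hu => ?_]
    · congr 1; rw [hs]; field_simp; ring
    · rw [hAcdf, if_neg hu.1.not_gt, if_pos hu.2, div_eq_inv_mul]
  have hcompl : {ω | q * B ω - p < A ω} = {ω | A ω ≤ U ω}ᶜ := by ext; simp [U]
  rw [hcompl, prob_compl_eq_one_sub (measurableSet_le hAmeas hU), hAU, ← ENNReal.ofReal_one,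
    ← ENNReal.ofReal_sub _ (by linarith), ENNReal.toReal_ofReal (by linarith), hs]
  field_simp
  ring
end
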